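/- Let n, t ∈ ℕ with t even and 2 ≤ t ≤ n. Then, as inequalities of rationals, ((n−t)/n)·C(n,t) ≤ (binom(n,t)_odd)² ≤ t·C(n,t). -/
import Mathlib


open scoped BigOperators

/-- The odd binomial coefficient `binom(n,t)_odd = ((n−1)(n−3)⋯(n−t+1))/((t−1)(t−3)⋯1)`,
for `t` even, where numerator and denominator each have `t/2` factors. -/
noncomputable def oddBinom (n t : ℕ) : ℚ :=
  (∏ i ∈ Finset.range (t / 2), ((n : ℚ) - (2 * i + 1))) /
    (∏ i ∈ Finset.range (t / 2), ((t : ℚ) - (2 * i + 1)))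

private lemma prod2 (n : ℕ) : ∀ m : ℕ, 2 * m ≤ n →
    (∏ i ∈ Finset.range m, ((n : ℚ) - 2 * i)) *
      (∏ i ∈ Finset.range m, ((n : ℚ) - (2 * i + 1))) = (n.descFactorial (2 * m) : ℚ)
  | 0, _ => by simp
  | m + 1, h => by
    have h' : 2 * m ≤ n := by omega
    have ih := prod2 n m h'
    rw [Finset.prod_range_succ, Finset.prod_range_succ]
    have e1 : 2 * (m + 1) = (2 * m + 1) + 1 := by ring
    rw [e1, Nat.descFactorial_succ, Nat.descFactorial_succ]
    have c1 : ((n - (2 * m + 1) : ℕ) : ℚ) = (n : ℚ) - (2 * m + 1) := by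
      push_cast [Nat.cast_sub (by omega : 2 * m + 1 ≤ n)]; ring
    have c2 : ((n - 2 * m : ℕ) : ℚ) = (n : ℚ) - 2 * m := by
      push_cast [Nat.cast_sub (by omega : 2 * m ≤ n)]; ring
    push_cast [c1, c2]
    push_cast at ih
    linear_combination ((n : ℚ) - 2 * m) * ((n : ℚ) - (2 * m + 1)) * ih

/-- For `t` even with `2 ≤ t ≤ n`:
`((n−t)/n)·C(n,t) ≤ (binom(n,t)_odd)² ≤ t·C(n,t)`. -/
theorem oddBinom_sq_estimates (n t : ℕ) (ht : Even t) (ht2 : 2 ≤ t) (htn : t ≤ n) :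
    ((n : ℚ) - (t : ℚ)) / (n : ℚ) * (n.choose t : ℚ) ≤ (oddBinom n t) ^ 2 ∧
      (oddBinom n t) ^ 2 ≤ (t : ℚ) * (n.choose t : ℚ) := by
  obtain ⟨m, hm⟩ := ht
  have hm2 : t = 2 * m := by omega
  have hmdiv : t / 2 = m := by omega
  have hm1 : 1 ≤ m := by omega
  set A : ℚ := ∏ i ∈ Finset.range m, ((n : ℚ) - (2 * i + 1)) with hAdef
  set B : ℚ := ∏ i ∈ Finset.range m, ((n : ℚ) - 2 * i) with hBdef
  set D : ℚ := ∏ i ∈ Finset.range m, ((t : ℚ) - (2 * i + 1)) with hDdef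
  set E : ℚ := ∏ i ∈ Finset.range m, ((t : ℚ) - 2 * i) with hEdef
  have hob : oddBinom n t = A / D := by rw [oddBinom, hmdiv]
  -- positivity facts
  have hA : 0 < A := Finset.prod_pos (fun i hi => by
    simp only [Finset.mem_range] at hi
    have : (2 * i + 1 : ℚ) < n := by
      have : 2 * i + 1 < n := by omega
      exact_mod_cast this
    linarith)
  have hB : 0 < B := Finset.prod_pos (fun i hi => by
    simp only [Finset.mem_range] at hi
    have : (2 * i : ℚ) < n := by
      have : 2 * i < n := by omega
      exact_mod_cast this
    linarith)
  have hD : 0 < D := Finset.prod_pos (fun i hi => by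
    simp only [Finset.mem_range] at hi
    have : (2 * i + 1 : ℚ) < t := by
      have : 2 * i + 1 < t := by omega
      exact_mod_cast this
    linarith)
  have hE : 0 < E := Finset.prod_pos (fun i hi => by
    simp only [Finset.mem_range] at hi
    have : (2 * i : ℚ) < t := by
      have : 2 * i < t := by omega
      exact_mod_cast this
    linarith)
  have hn0 : (0 : ℚ) < n := by
    have : 0 < n := by omega
    exact_mod_cast this
  have hnt : (t : ℚ) ≤ (n : ℚ) := by exact_mod_cast htn
  -- key identity: choose * (E * D) = B * A
  have hED : E * D = (Nat.factorial t : ℚ) := by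
    have := prod2 t m (by omega)
    rwa [← hm2, Nat.descFactorial_self] at this
  have hBA : B * A = (n.descFactorial t : ℚ) := by
    have := prod2 n m (by omega)
    rwa [← hm2] at this
  have hchoose : (n.choose t : ℚ) * (E * D) = B * A := by
    rw [hED, hBA]
    have := Nat.descFactorial_eq_factorial_mul_choose n t
    have : (n.descFactorial t : ℚ) = (Nat.factorial t : ℚ) * (n.choose t : ℚ) := by
      exact_mod_cast congrArg (Nat.cast : ℕ → ℚ) this
    rw [this]; ring
  -- termwise inequalities
  have hAB : A ≤ B := Finset.prod_le_prod (fun i hi => by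
    simp only [Finset.mem_range] at hi
    have : (2 * i + 1 : ℚ) ≤ n := by
      have : 2 * i + 1 ≤ n := by omega
      exact_mod_cast this
    linarith) (fun i _ => by linarith)
  have h1 : B * D ≤ A * E := by
    have := Finset.prod_le_prod (f := fun i : ℕ => ((n : ℚ) - 2 * (i : ℚ)) * ((t : ℚ) - (2 * (i : ℚ) + 1)))
      (g := fun i : ℕ => ((n : ℚ) - (2 * (i : ℚ) + 1)) * ((t : ℚ) - 2 * (i : ℚ))) (s := Finset.range m)
      (fun i hi => by
        simp only [Finset.mem_range] at hi
        have h2i : (2 * (i : ℚ) + 1) ≤ n := by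
          have : 2 * i + 1 ≤ n := by omega
          exact_mod_cast this
        have h2i' : (2 * (i : ℚ) + 1) ≤ t := by
          have : 2 * i + 1 ≤ t := by omega
          exact_mod_cast this
        show (0 : ℚ) ≤ ((n : ℚ) - 2 * (i : ℚ)) * ((t : ℚ) - (2 * (i : ℚ) + 1))
        exact mul_nonneg (by linarith) (by linarith))
      (fun i hi => by
        simp only [Finset.mem_range] at hi
        have h2i : (2 * (i : ℚ) + 1) ≤ n := by
          have : 2 * i + 1 ≤ n := by omega
          exact_mod_cast this
        have h2i' : (2 * (i : ℚ) + 1) ≤ t := by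
          have : 2 * i + 1 ≤ t := by omega
          exact_mod_cast this
        show ((n : ℚ) - 2 * (i : ℚ)) * ((t : ℚ) - (2 * (i : ℚ) + 1)) ≤
          ((n : ℚ) - (2 * (i : ℚ) + 1)) * ((t : ℚ) - 2 * (i : ℚ))
        nlinarith [hnt])
    rw [Finset.prod_mul_distrib, Finset.prod_mul_distrib] at this
    exact this
  -- E ≤ t * D
  have h3 : E ≤ (t : ℚ) * D := by
    obtain ⟨k, hk⟩ : ∃ k, m = k + 1 := ⟨m - 1, by omega⟩
    have hEeq : E = (∏ i ∈ Finset.range k, ((t : ℚ) - 2 * (i + 1))) * (t : ℚ) := by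
      rw [hEdef, hk, Finset.prod_range_succ']
      simp
    have hDeq : D = (∏ i ∈ Finset.range k, ((t : ℚ) - (2 * i + 1))) * 1 := by
      rw [hDdef, hk, Finset.prod_range_succ]
      congr 1
      push_cast [hm2, hk]
      ring
    have hstep : (∏ i ∈ Finset.range k, ((t : ℚ) - 2 * (i + 1))) ≤
        ∏ i ∈ Finset.range k, ((t : ℚ) - (2 * i + 1)) := by
      apply Finset.prod_le_prod
      · intro i hi
        simp only [Finset.mem_range] at hi
        have : (2 * (i + 1) : ℚ) ≤ t := by
          have : 2 * (i + 1) ≤ t := by omega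
          exact_mod_cast this
        linarith
      · intro i _
        linarith
    have ht0 : (0 : ℚ) < t := by
      have : 0 < t := by omega
      exact_mod_cast this
    calc E = (∏ i ∈ Finset.range k, ((t : ℚ) - 2 * (i + 1))) * (t : ℚ) := hEeq
      _ ≤ (∏ i ∈ Finset.range k, ((t : ℚ) - (2 * i + 1))) * (t : ℚ) := by
          apply mul_le_mul_of_nonneg_right hstep (le_of_lt ht0)
      _ = (t : ℚ) * D := by rw [hDeq]; ring
  -- finish
  clear_value A B D E
  have hCval : (n.choose t : ℚ) = B * A / (E * D) := by
    field_simp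
    linarith [hchoose]
  rw [hob, hCval]
  constructor
  · rw [div_pow]
    have key : ((n : ℚ) - t) * (B * A) * D ^ 2 ≤ A ^ 2 * ((n : ℚ) * (E * D)) := by
      have e1 : ((n : ℚ) - t) * (B * D) ≤ (n : ℚ) * (A * E) := by
        have : ((n : ℚ) - t) * (B * D) ≤ (n : ℚ) * (B * D) := by
          apply mul_le_mul_of_nonneg_right (by linarith) (by positivity)
        have h2 : (n : ℚ) * (B * D) ≤ (n : ℚ) * (A * E) := by
          apply mul_le_mul_of_nonneg_left h1 (le_of_lt hn0)
        linarith
      nlinarith [mul_le_mul_of_nonneg_left e1 (mul_pos hA hD).le, hA.le, hD.le]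
    calc ((n : ℚ) - t) / n * (B * A / (E * D))
        = (((n : ℚ) - t) * (B * A)) / ((n : ℚ) * (E * D)) := by ring
      _ ≤ A ^ 2 / D ^ 2 := by
          rw [div_le_div_iff₀ (by positivity) (by positivity)]
          linarith [key]
  · rw [div_pow, div_le_iff₀ (by positivity)]
    have ht0 : (0 : ℚ) ≤ (t : ℚ) := by positivity
    have key : A ^ 2 * (E * D) ≤ (t : ℚ) * (B * A) * D ^ 2 := by
      have k1 : A * A * E ≤ A * A * ((t : ℚ) * D) :=
        mul_le_mul_of_nonneg_left h3 (by positivity)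
      have k1' : A * A * E * D ≤ A * A * ((t : ℚ) * D) * D :=
        mul_le_mul_of_nonneg_right k1 hD.le
      have k2 : A * A ≤ B * A := mul_le_mul_of_nonneg_right hAB hA.le
      have k3 : A * A * ((t : ℚ) * D * D) ≤ B * A * ((t : ℚ) * D * D) :=
        mul_le_mul_of_nonneg_right k2 (by positivity)
      linarith [k1', k3]
    have hEDpos : (0 : ℚ) < E * D := mul_pos hE hD
    calc A ^ 2 = A ^ 2 * (E * D) / (E * D) := by
          rw [mul_div_cancel_right₀ _ hEDpos.ne']
      _ ≤ (t : ℚ) * (B * A) * D ^ 2 / (E * D) := (div_le_div_iff_of_pos_right hEDpos).mpr key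
      _ = (t : ℚ) * (B * A / (E * D)) * D ^ 2 := by ring
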